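/- Fix N ∈ ℕ, constants ρ, ν, α > 0, and points t₁,…,t_m ∈ ℝ^d. For k ∈ Z_N^d := {−N,…,N}^d define complex vectors u_k, v_k ∈ ℂ^m by (u_k)_j = exp(2πi⟨k,t_j⟩) and (v_k)_j = exp(−2πi⟨k,t_j⟩), and for a real p×d matrix Λ of full rank d define a^{(k)}(Λ) = 1 + 4π²α² det(ΛᵀΛ)^{1/d} kᵀ(ΛᵀΛ)^{−1}k, φ_Λ(k) = ρ (Γ(ν+d/2)/Γ(ν)) (2√π α)^d · a^{(k)}(Λ)^{−(ν+d/2)}, and the m×m complex matrix C^app(Λ) = Σ_{k∈Z_N^d} [φ_Λ(k)/(1−φ_Λ(k))] u_k v_kᵀ. Suppose φ_Λ(k) < 1 for all k ∈ Z_N^d and C^app(Λ) is invertible. Then for every entry index (a,b) with 1 ≤ a ≤ p, 1 ≤ b ≤ d, the partial derivative of the map Λ ↦ det C^app(Λ) with respect to the (a,b) entry of Λ equals det(C^app(Λ)) · (−4π²α²(ν + d/2)) · Σ_{k∈Z_N^d} [φ_Λ(k)/((1−φ_Λ(k))² a^{(k)}(Λ))] · g^{(k)}(Λ)_{ab} ·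 (v_kᵀ (C^app(Λ))^{−1} u_k), where g^{(k)}(Λ) = 2 det(ΛᵀΛ)^{1/d} Λ (ΛᵀΛ)^{−1} [ (1/d)(kᵀ(ΛᵀΛ)^{−1}k) I_d − k kᵀ (ΛᵀΛ)^{−1} ]. -/

import Mathlib

open Matrix Real

section Helpers

lemma hasDerivAt_det_path {n : ℕ} {F : Type*} [NormedCommRing F] [NormedAlgebra ℝ F]
    {M : ℝ → Matrix (Fin n) (Fin n) F} {M' : Matrix (Fin n) (Fin n) F} {x : ℝ}
    (h : ∀ i j, HasDerivAt (fun s => M s i j) (M' i j) x) :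
    HasDerivAt (fun s => (M s).det) ((M' * (M x).adjugate).trace) x := by
  have key : HasDerivAt (fun s => (M s).det)
      (∑ σ : Equiv.Perm (Fin n), ((Equiv.Perm.sign σ : ℤ) : F) *
        ∑ i, (∏ j ∈ Finset.univ.erase i, M x (σ j) j) * M' (σ i) i) x := by
    simp only [Matrix.det_apply']
    refine HasDerivAt.fun_sum fun σ _ => ?_
    have hp := HasDerivAt.fun_finsetProd (𝕜 := ℝ) (x := x) (u := (Finset.univ : Finset (Fin n)))
      (f := fun i s => M s (σ i) i) (f' := fun i => M' (σ i) i) (fun i _ => h (σ i) i)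
    have := hp.const_mul (((Equiv.Perm.sign σ : ℤ) : F))
    simpa [smul_eq_mul, mul_comm] using this
  convert key using 1
  have e1 : (M' * (M x).adjugate).trace = ∑ i, ((M x).updateRow i (M' i)).det := by
    have : ∀ i : Fin n, ((M x).updateRow i (M' i)).det = ∑ j, (M x).adjugate j i * M' i j := by
      intro i
      rw [← Matrix.cramer_transpose_apply, Matrix.cramer_eq_adjugate_mulVec]
      simp [Matrix.mulVec, dotProduct, ← Matrix.adjugate_transpose, Matrix.transpose_apply]
    simp only [this, Matrix.trace, Matrix.diag, Matrix.mul_apply]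
    exact Finset.sum_congr rfl fun i _ => Finset.sum_congr rfl fun j _ => (mul_comm _ _)
  rw [e1]
  simp only [Matrix.det_apply']
  rw [Finset.sum_comm]
  refine Finset.sum_congr rfl fun σ _ => ?_
  rw [← Finset.mul_sum]
  congr 1
  rw [← Equiv.sum_comp σ (fun i => ∏ j, ((M x).updateRow i (M' i)) (σ j) j)]
  refine Finset.sum_congr rfl fun i _ => ?_
  have hterm : ∀ j : Fin n, ((M x).updateRow (σ i) (M' (σ i))) (σ j) j
      = if j = i then M' (σ i) j else M x (σ j) j := by
    intro j
    rw [Matrix.updateRow_apply]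
    simp [σ.injective.eq_iff]
  rw [Finset.prod_congr rfl fun j _ => hterm j]
  rw [← Finset.mul_prod_erase Finset.univ _ (Finset.mem_univ i)]
  rw [if_pos rfl, mul_comm]
  congr 1
  exact Finset.prod_congr rfl fun j hj => if_neg (Finset.ne_of_mem_erase hj)

lemma hasDerivAt_inv_path {n : ℕ} {M : ℝ → Matrix (Fin n) (Fin n) ℝ}
    {M' : Matrix (Fin n) (Fin n) ℝ} {x : ℝ}
    (h : ∀ i j, HasDerivAt (fun s => M s i j) (M' i j) x)
    (hdet : (M x).det ≠ 0) :
    ∀ i j, HasDerivAt (fun s => (M s)⁻¹ i j) ((-((M x)⁻¹ * M' * (M x)⁻¹)) i j) x := by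
  have hdetD : HasDerivAt (fun s => (M s).det) ((M' * (M x).adjugate).trace) x :=
    hasDerivAt_det_path h
  have hadj : ∀ i j, ∃ v, HasDerivAt (fun s => (M s).adjugate i j) v x := by
    intro i j
    have hfun : (fun s => (M s).adjugate i j)
        = fun s => ((M s).updateRow j (Pi.single i 1)).det := by
      funext s; rw [Matrix.adjugate_apply]
    have hentry : ∀ i' j', HasDerivAt (fun s => (M s).updateRow j (Pi.single i 1) i' j')
        (Matrix.updateRow M' j 0 i' j') x := by
      intro i' j'
      by_cases hij : i' = j
      · subst hij
        simp only [Matrix.updateRow_self]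
        simpa using hasDerivAt_const (𝕜 := ℝ) x ((Pi.single i 1 : Fin n → ℝ) j')
      · simp only [Matrix.updateRow_ne hij]
        exact h i' j'
    exact ⟨_, hfun ▸ hasDerivAt_det_path hentry⟩
  choose adjD hadjD using hadj
  set W' : Matrix (Fin n) (Fin n) ℝ := Matrix.of fun i j =>
    -((M' * (M x).adjugate).trace) / (M x).det ^ 2 * (M x).adjugate i j
      + ((M x).det)⁻¹ * adjD i j with hW'def
  have hinv : ∀ i j, HasDerivAt (fun s => (M s)⁻¹ i j) (W' i j) x := by
    intro i j
    have hfun : (fun s => (M s)⁻¹ i j) = fun s => ((M s).det)⁻¹ * (M s).adjugate i j := by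
      funext s
      rw [Matrix.inv_def]
      simp [Ring.inverse_eq_inv', div_eq_mul_inv]
    rw [hfun]
    exact (hdetD.inv hdet).mul (hadjD i j)
  have hMcont : ContinuousAt (fun s => M s) x := by
    refine continuousAt_pi.mpr ?_; intro i
    rw [continuousAt_pi]; intro j
    exact (h i j).continuousAt
  have hdcont : ContinuousAt (fun s => (M s).det) x :=
    ((continuous_id.matrix_det).continuousAt).comp hMcont
  have hev : ∀ᶠ s in nhds x, M s * (M s)⁻¹ = 1 :=
    (hdcont.eventually_ne hdet).mono fun s hs =>
      Matrix.mul_nonsing_inv _ (isUnit_iff_ne_zero.mpr hs)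
  have hzero : M' * (M x)⁻¹ + M x * W' = 0 := by
    have h1 : ∀ i j, HasDerivAt (fun s => (M s * (M s)⁻¹) i j)
        ((M' * (M x)⁻¹ + M x * W') i j) x := by
      intro i j
      have hfun : (fun s => (M s * (M s)⁻¹) i j)
          = fun s => ∑ l, M s i l * (M s)⁻¹ l j := by
        funext s; rw [Matrix.mul_apply]
      rw [hfun]
      have hsum : HasDerivAt (fun s => ∑ l, M s i l * (M s)⁻¹ l j)
          (∑ l, (M' i l * (M x)⁻¹ l j + M x i l * W' l j)) x :=
        HasDerivAt.fun_sum fun l _ => (h i l).mul (hinv l j)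
      convert hsum using 1
      simp [Matrix.add_apply, Matrix.mul_apply, Finset.sum_add_distrib]
    have h2 : ∀ i j, HasDerivAt (fun s => (M s * (M s)⁻¹) i j) 0 x := by
      intro i j
      refine (hasDerivAt_const x ((1 : Matrix (Fin n) (Fin n) ℝ) i j)).congr_of_eventuallyEq ?_
      exact hev.mono fun s hs => by
        show (M s * (M s)⁻¹) i j = (1 : Matrix (Fin n) (Fin n) ℝ) i j
        rw [hs]
    ext i j
    have := (h1 i j).unique (h2 i j)
    simpa using this
  have hBA : (M x)⁻¹ * M x = 1 := Matrix.nonsing_inv_mul _ (isUnit_iff_ne_zero.mpr hdet)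
  have hWval : W' = -((M x)⁻¹ * M' * (M x)⁻¹) := by
    have h3 : M x * W' = -(M' * (M x)⁻¹) :=
      eq_neg_of_add_eq_zero_left (by rw [add_comm]; exact hzero)
    calc W' = ((M x)⁻¹ * M x) * W' := by rw [hBA, one_mul]
      _ = (M x)⁻¹ * (M x * W') := by rw [Matrix.mul_assoc]
      _ = (M x)⁻¹ * (-(M' * (M x)⁻¹)) := by rw [h3]
      _ = -((M x)⁻¹ * M' * (M x)⁻¹) := by
          rw [Matrix.mul_neg, Matrix.mul_assoc]
  intro i j
  rw [← hWval]
  exact hinv i j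

lemma mul_vecMulVec' {q r s : ℕ} {R : Type*} [CommRing R] (M : Matrix (Fin q) (Fin r) R)
    (u : Fin r → R) (v : Fin s → R) :
    M * Matrix.vecMulVec u v = Matrix.vecMulVec (M *ᵥ u) v := by
  ext i j
  simp [Matrix.mul_apply, Matrix.vecMulVec_apply, Matrix.mulVec, dotProduct,
    Finset.sum_mul, mul_assoc]

lemma vecMulVec_mul' {q r s : ℕ} {R : Type*} [CommRing R] (u : Fin q → R) (v : Fin r → R)
    (M : Matrix (Fin r) (Fin s) R) :
    Matrix.vecMulVec u v * M = Matrix.vecMulVec u (v ᵥ* M) := by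
  ext i j
  simp [Matrix.mul_apply, Matrix.vecMulVec_apply, Matrix.vecMul, dotProduct,
    Finset.mul_sum, mul_assoc]

lemma trace_vecMulVec_mul {q : ℕ} {R : Type*} [CommRing R] (u v : Fin q → R)
    (W : Matrix (Fin q) (Fin q) R) :
    (Matrix.vecMulVec u v * W).trace = v ⬝ᵥ (W *ᵥ u) := by
  simp only [Matrix.trace, Matrix.diag, Matrix.mul_apply, Matrix.vecMulVec_apply,
    dotProduct, Matrix.mulVec]
  rw [Finset.sum_comm]
  refine Finset.sum_congr rfl fun j _ => ?_
  rw [Finset.mul_sum]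
  refine Finset.sum_congr rfl fun i _ => by ring

end Helpers

/-- The gradient matrix `g^{(k)}(Λ)`. -/
noncomputable def gMat {p d : ℕ} (k : Fin d → ℝ) (Λ : Matrix (Fin p) (Fin d) ℝ) :
    Matrix (Fin p) (Fin d) ℝ :=
  (2 * (Λᵀ * Λ).det ^ ((1 : ℝ) / d)) •
    (Λ * (Λᵀ * Λ)⁻¹ *
      (((k ⬝ᵥ ((Λᵀ * Λ)⁻¹ *ᵥ k)) / d) • (1 : Matrix (Fin d) (Fin d) ℝ) -
        Matrix.vecMulVec k k * (Λᵀ * Λ)⁻¹))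

/-- `a^{(k)}(Λ) = 1 + 4π²α² det(ΛᵀΛ)^{1/d} kᵀ(ΛᵀΛ)⁻¹k`. -/
noncomputable def aWM {p d : ℕ} (α : ℝ) (k : Fin d → ℝ)
    (Λ : Matrix (Fin p) (Fin d) ℝ) : ℝ :=
  1 + 4 * π ^ 2 * α ^ 2 * (Λᵀ * Λ).det ^ ((1 : ℝ) / d) * (k ⬝ᵥ ((Λᵀ * Λ)⁻¹ *ᵥ k))

/-- The Whittle–Matérn-like spectral density `φ_Λ(k)`. -/
noncomputable def phiWM {p d : ℕ} (ρ ν α : ℝ) (k : Fin d → ℝ)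
    (Λ : Matrix (Fin p) (Fin d) ℝ) : ℝ :=
  ρ * (Real.Gamma (ν + d / 2) / Real.Gamma ν) * (2 * Real.sqrt π * α) ^ d *
    aWM α k Λ ^ (-(ν + (d : ℝ) / 2))

/-- The lattice `Z_N^d = {-N, …, N}^d`. -/
noncomputable def latticeZN (d N : ℕ) : Finset (Fin d → ℤ) :=
  Fintype.piFinset fun _ => Finset.Icc (-(N : ℤ)) (N : ℤ)

/-- `(u_k)_j = exp(2πi⟨k, t_j⟩)`. -/
noncomputable def uVec {d m : ℕ} (t : Fin m → (Fin d → ℝ)) (k : Fin d → ℤ) :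
    Fin m → ℂ :=
  fun j => Complex.exp (2 * π * Complex.I * (((fun i => (k i : ℝ)) ⬝ᵥ t j : ℝ) : ℂ))

/-- `(v_k)_j = exp(−2πi⟨k, t_j⟩)`. -/
noncomputable def vVec {d m : ℕ} (t : Fin m → (Fin d → ℝ)) (k : Fin d → ℤ) :
    Fin m → ℂ :=
  fun j => Complex.exp (-(2 * π * Complex.I * (((fun i => (k i : ℝ)) ⬝ᵥ t j : ℝ) : ℂ)))

/-- The truncated spectral approximation `C^app(Λ) = Σ_k φ/(1−φ) u_k v_kᵀ`
for the Whittle–Matérn-like DPP. -/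
noncomputable def CappWM {p d m : ℕ} (ρ ν α : ℝ) (N : ℕ) (t : Fin m → (Fin d → ℝ))
    (L : Matrix (Fin p) (Fin d) ℝ) : Matrix (Fin m) (Fin m) ℂ :=
  ∑ k ∈ latticeZN d N,
    ((phiWM ρ ν α (fun i => (k i : ℝ)) L /
        (1 - phiWM ρ ν α (fun i => (k i : ℝ)) L) : ℝ) : ℂ) •
      Matrix.vecMulVec (uVec t k) (vVec t k)

theorem stmt19 (p d m : ℕ) (hd : 1 ≤ d) (hdp : d ≤ p)
    (N : ℕ) (ρ ν α : ℝ) (hρ : 0 < ρ) (hν : 0 < ν) (hα : 0 < α)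
    (t : Fin m → (Fin d → ℝ))
    (Λ : Matrix (Fin p) (Fin d) ℝ) (hΛ : Λ.rank = d)
    (hφ : ∀ k ∈ latticeZN d N, phiWM ρ ν α (fun i => (k i : ℝ)) Λ < 1)
    (hC : IsUnit (CappWM ρ ν α N t Λ).det) :
    ∀ (a : Fin p) (b : Fin d),
      HasDerivAt
        (fun s : ℝ => (CappWM ρ ν α N t (Λ + s • Matrix.single a b 1)).det)
        ((CappWM ρ ν α N t Λ).det *
          ((-(4 * π ^ 2 * α ^ 2 * (ν + (d : ℝ) / 2)) : ℝ) : ℂ) *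
          ∑ k ∈ latticeZN d N,
            ((phiWM ρ ν α (fun i => (k i : ℝ)) Λ /
                ((1 - phiWM ρ ν α (fun i => (k i : ℝ)) Λ) ^ 2 *
                  aWM α (fun i => (k i : ℝ)) Λ) *
                gMat (fun i => (k i : ℝ)) Λ a b : ℝ) : ℂ) *
              (vVec t k ⬝ᵥ ((CappWM ρ ν α N t Λ)⁻¹ *ᵥ uVec t k)))
        0 := by
  intro a b
  set E : Matrix (Fin p) (Fin d) ℝ := Matrix.single a b 1 with hEdef
  -- injectivity of Λ
  have hinj : Function.Injective Λ.mulVecLin := by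
    rw [← LinearMap.ker_eq_bot]
    have h1 := LinearMap.finrank_range_add_finrank_ker Λ.mulVecLin
    have hr : Module.finrank ℝ (LinearMap.range Λ.mulVecLin) = d := hΛ
    have h2 : Module.finrank ℝ (Fin d → ℝ) = d := Module.finrank_fin_fun ℝ
    rw [hr, h2] at h1
    have h3 : Module.finrank ℝ (LinearMap.ker Λ.mulVecLin) = 0 := by omega
    exact Submodule.finrank_eq_zero.mp h3
  have hApos : (Λᵀ * Λ).PosDef := by
    refine Matrix.PosDef.of_dotProduct_mulVec_pos ?_ ?_
    · show (Λᵀ * Λ)ᴴ = Λᵀ * Λ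
      ext i j
      simp only [Matrix.conjTranspose_apply, Matrix.mul_apply, Matrix.transpose_apply,
        star_trivial]
      exact Finset.sum_congr rfl fun l _ => mul_comm _ _
    · intro x hx
      have hx0 : Λ *ᵥ x ≠ 0 := by
        intro hcon
        apply hx
        have hxx : Λ.mulVecLin x = Λ.mulVecLin 0 := by
          simpa [Matrix.mulVecLin_apply] using hcon
        exact hinj hxx
      have hstar : star x = x := by funext i; simp
      have hrw : star x ⬝ᵥ ((Λᵀ * Λ) *ᵥ x) = (Λ *ᵥ x) ⬝ᵥ (Λ *ᵥ x) := by
        rw [hstar, ← Matrix.mulVec_mulVec, Matrix.dotProduct_mulVec,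
          Matrix.vecMul_transpose]
      rw [hrw]
      have hnn : 0 ≤ (Λ *ᵥ x) ⬝ᵥ (Λ *ᵥ x) := by
        simp only [dotProduct]
        exact Finset.sum_nonneg fun i _ => mul_self_nonneg _
      have hne : (Λ *ᵥ x) ⬝ᵥ (Λ *ᵥ x) ≠ 0 :=
        fun hcon => hx0 (dotProduct_self_eq_zero.mp hcon)
      exact lt_of_le_of_ne hnn (Ne.symm hne)
  have hδpos : 0 < (Λᵀ * Λ).det := hApos.det_pos
  have hδne : (Λᵀ * Λ).det ≠ 0 := ne_of_gt hδpos
  have hAsymm : (Λᵀ * Λ)ᵀ = Λᵀ * Λ := by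
    rw [Matrix.transpose_mul, Matrix.transpose_transpose]
  have hBsym : ((Λᵀ * Λ)⁻¹)ᵀ = (Λᵀ * Λ)⁻¹ := by
    rw [Matrix.transpose_nonsing_inv, hAsymm]
  have hBsymE : ∀ i j, (Λᵀ * Λ)⁻¹ i j = (Λᵀ * Λ)⁻¹ j i := by
    intro i j
    conv_lhs => rw [← hBsym]
    rw [Matrix.transpose_apply]
  have hwB : ∀ x : Fin d → ℝ, x ᵥ* (Λᵀ * Λ)⁻¹ = (Λᵀ * Λ)⁻¹ *ᵥ x := by
    intro x
    conv_lhs => rw [← hBsym]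
    rw [Matrix.vecMul_transpose]
  have hadjA : (Λᵀ * Λ).adjugate = (Λᵀ * Λ).det • (Λᵀ * Λ)⁻¹ := by
    rw [Matrix.inv_def, smul_smul, Ring.inverse_eq_inv, mul_inv_cancel₀ hδne, one_smul]
  -- E helpers
  have htrE : ∀ X : Matrix (Fin p) (Fin d) ℝ, (Eᵀ * X).trace = X a b := by
    intro X
    simp [hEdef, Matrix.trace, Matrix.diag, Matrix.mul_apply, Matrix.transpose_apply,
      Matrix.single, Matrix.of_apply, ite_and, ite_mul, zero_mul, one_mul,
      Finset.sum_ite_eq]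
  have htrE2 : ∀ Y : Matrix (Fin d) (Fin p) ℝ, (Y * E).trace = Y b a := by
    intro Y
    simp [hEdef, Matrix.trace, Matrix.diag, Matrix.mul_apply,
      Matrix.single, Matrix.of_apply, ite_and, mul_ite, mul_zero, mul_one,
      Finset.sum_ite_eq, Finset.sum_ite_eq']
  have hdotE1 : ∀ (x : Fin d → ℝ) (y : Fin p → ℝ), x ⬝ᵥ (Eᵀ *ᵥ y) = x b * y a := by
    intro x y
    simp [hEdef, dotProduct, Matrix.mulVec, Matrix.transpose_apply, Matrix.single,
      Matrix.of_apply, ite_and, ite_mul, mul_ite, zero_mul, mul_zero, one_mul, mul_one,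
      Finset.sum_ite_eq, Finset.sum_ite_eq']
  have hdotE2 : ∀ (y : Fin p → ℝ) (x : Fin d → ℝ), y ⬝ᵥ (E *ᵥ x) = y a * x b := by
    intro y x
    simp [hEdef, dotProduct, Matrix.mulVec, Matrix.single,
      Matrix.of_apply, ite_and, ite_mul, mul_ite, zero_mul, mul_zero, one_mul, mul_one,
      Finset.sum_ite_eq, Finset.sum_ite_eq']
  -- per-k scalar derivative
  have hck : ∀ k ∈ latticeZN d N,
      HasDerivAt (fun s : ℝ => phiWM ρ ν α (fun i => (k i : ℝ)) (Λ + s • E) /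
          (1 - phiWM ρ ν α (fun i => (k i : ℝ)) (Λ + s • E)))
        (-(4 * π ^ 2 * α ^ 2 * (ν + (d : ℝ) / 2)) *
          (phiWM ρ ν α (fun i => (k i : ℝ)) Λ /
            ((1 - phiWM ρ ν α (fun i => (k i : ℝ)) Λ) ^ 2 * aWM α (fun i => (k i : ℝ)) Λ) *
            gMat (fun i => (k i : ℝ)) Λ a b)) 0 := by
    intro k hk
    set kv : Fin d → ℝ := fun i => (k i : ℝ) with hkv
    set T : Matrix (Fin d) (Fin d) ℝ := Eᵀ * Λ + Λᵀ * E with hT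
    have hlin : ∀ c e : ℝ, HasDerivAt (fun s : ℝ => c + s * e) e 0 := by
      intro c e
      simpa using ((hasDerivAt_id (0:ℝ)).mul_const e).const_add c
    have hMd : ∀ i j, HasDerivAt (fun s : ℝ => ((Λ + s • E)ᵀ * (Λ + s • E)) i j) (T i j) 0 := by
      intro i j
      have hfun : (fun s : ℝ => ((Λ + s • E)ᵀ * (Λ + s • E)) i j)
          = fun s => ∑ l, (Λ l i + s * E l i) * (Λ l j + s * E l j) := by
        funext s
        simp [Matrix.mul_apply, Matrix.transpose_apply, Matrix.add_apply, Matrix.smul_apply,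
          smul_eq_mul]
      rw [hfun]
      have hsum := HasDerivAt.fun_sum (u := Finset.univ)
        (A := fun l (s : ℝ) => (Λ l i + s * E l i) * (Λ l j + s * E l j))
        (A' := fun l => E l i * (Λ l j + 0 * E l j) + (Λ l i + 0 * E l i) * E l j)
        (fun l _ => (hlin (Λ l i) (E l i)).mul (hlin (Λ l j) (E l j)))
      refine hsum.congr_deriv ?_
      simp [hT, Matrix.add_apply, Matrix.mul_apply, Matrix.transpose_apply,
        Finset.sum_add_distrib]
    have hdet0 : (((Λ + (0:ℝ) • E)ᵀ * (Λ + (0:ℝ) • E))).det ≠ 0 := by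
      simpa using hδne
    have hdetpath : HasDerivAt (fun s : ℝ => ((Λ + s • E)ᵀ * (Λ + s • E)).det)
        ((T * (Λᵀ * Λ).adjugate).trace) 0 := by
      have := hasDerivAt_det_path hMd
      simpa using this
    have hinvp : ∀ i j, HasDerivAt (fun s : ℝ => (((Λ + s • E)ᵀ * (Λ + s • E))⁻¹) i j)
        ((-((Λᵀ * Λ)⁻¹ * T * (Λᵀ * Λ)⁻¹)) i j) 0 := by
      have hh := hasDerivAt_inv_path hMd hdet0
      intro i j
      have h2 := hh i j
      simpa using h2
    have hq0 : (0:ℝ) ≤ kv ⬝ᵥ (Λᵀ * Λ)⁻¹ *ᵥ kv := by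
      have h1 := hApos.inv.posSemidef.dotProduct_mulVec_nonneg kv
      have hstar : star kv = kv := by funext i; simp
      rwa [hstar] at h1
    have ha0pos : (0:ℝ) < aWM α kv Λ := by
      simp only [aWM]
      have h2 : (0:ℝ) ≤ 4 * π ^ 2 * α ^ 2 * (Λᵀ * Λ).det ^ ((1:ℝ)/d) *
          (kv ⬝ᵥ (Λᵀ * Λ)⁻¹ *ᵥ kv) := by
        apply mul_nonneg
        · have := Real.rpow_pos_of_pos hδpos ((1:ℝ)/d)
          positivity
        · exact hq0
      linarith
    have hq : HasDerivAt (fun s : ℝ => kv ⬝ᵥ (((Λ + s • E)ᵀ * (Λ + s • E))⁻¹ *ᵥ kv))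
        (kv ⬝ᵥ ((-((Λᵀ * Λ)⁻¹ * T * (Λᵀ * Λ)⁻¹)) *ᵥ kv)) 0 := by
      have hfun : ∀ W : Matrix (Fin d) (Fin d) ℝ,
          kv ⬝ᵥ (W *ᵥ kv) = ∑ i, kv i * ∑ j, W i j * kv j := by
        intro W; simp [dotProduct, Matrix.mulVec]
      simp only [hfun]
      exact HasDerivAt.fun_sum fun i _ =>
        ((HasDerivAt.fun_sum fun j _ => (hinvp i j).mul_const (kv j)).const_mul (kv i))
    have hrD : HasDerivAt (fun s : ℝ => ((Λ + s • E)ᵀ * (Λ + s • E)).det ^ ((1:ℝ)/d))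
        ((T * (Λᵀ * Λ).adjugate).trace * ((1:ℝ)/d) * (Λᵀ * Λ).det ^ ((1:ℝ)/d - 1)) 0 := by
      have := hdetpath.rpow_const (p := (1:ℝ)/d) (Or.inl (by simpa using hδne))
      simpa using this
    have ha : HasDerivAt (fun s : ℝ => aWM α kv (Λ + s • E))
        (4 * π ^ 2 * α ^ 2 *
          ((T * (Λᵀ * Λ).adjugate).trace * ((1:ℝ)/d) * (Λᵀ * Λ).det ^ ((1:ℝ)/d - 1) *
              (kv ⬝ᵥ ((Λᵀ * Λ)⁻¹ *ᵥ kv))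
            + (Λᵀ * Λ).det ^ ((1:ℝ)/d) *
              (kv ⬝ᵥ ((-((Λᵀ * Λ)⁻¹ * T * (Λᵀ * Λ)⁻¹)) *ᵥ kv)))) 0 := by
      have hfun : (fun s : ℝ => aWM α kv (Λ + s • E))
          = fun s => 1 + 4 * π ^ 2 * α ^ 2 *
              (((Λ + s • E)ᵀ * (Λ + s • E)).det ^ ((1:ℝ)/d) *
                (kv ⬝ᵥ (((Λ + s • E)ᵀ * (Λ + s • E))⁻¹ *ᵥ kv))) := by
        funext s; simp only [aWM]; ring
      rw [hfun]
      have := ((hrD.mul hq).const_mul (4 * π ^ 2 * α ^ 2)).const_add 1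
      simpa using this
    set AD : ℝ := 4 * π ^ 2 * α ^ 2 *
          ((T * (Λᵀ * Λ).adjugate).trace * ((1:ℝ)/d) * (Λᵀ * Λ).det ^ ((1:ℝ)/d - 1) *
              (kv ⬝ᵥ ((Λᵀ * Λ)⁻¹ *ᵥ kv))
            + (Λᵀ * Λ).det ^ ((1:ℝ)/d) *
              (kv ⬝ᵥ ((-((Λᵀ * Λ)⁻¹ * T * (Λᵀ * Λ)⁻¹)) *ᵥ kv))) with hADdef
    have hφd : HasDerivAt (fun s : ℝ => phiWM ρ ν α kv (Λ + s • E))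
        (ρ * (Real.Gamma (ν + d / 2) / Real.Gamma ν) * (2 * Real.sqrt π * α) ^ d *
          (AD * (-(ν + (d : ℝ) / 2)) * aWM α kv Λ ^ (-(ν + (d : ℝ) / 2) - 1))) 0 := by
      have hfun : (fun s : ℝ => phiWM ρ ν α kv (Λ + s • E))
          = fun s => ρ * (Real.Gamma (ν + d / 2) / Real.Gamma ν) * (2 * Real.sqrt π * α) ^ d *
              aWM α kv (Λ + s • E) ^ (-(ν + (d : ℝ) / 2)) := by
        funext s; simp only [phiWM]
      rw [hfun]
      have := (ha.rpow_const (p := -(ν + (d : ℝ) / 2))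
          (Or.inl (by simpa using ha0pos.ne'))).const_mul
        (ρ * (Real.Gamma (ν + d / 2) / Real.Gamma ν) * (2 * Real.sqrt π * α) ^ d)
      simpa using this
    have h1φ : (1:ℝ) - phiWM ρ ν α kv Λ ≠ 0 := sub_ne_zero.mpr (ne_of_gt (hφ k hk))
    set φD : ℝ := ρ * (Real.Gamma (ν + d / 2) / Real.Gamma ν) * (2 * Real.sqrt π * α) ^ d *
        (AD * (-(ν + (d : ℝ) / 2)) * aWM α kv Λ ^ (-(ν + (d : ℝ) / 2) - 1)) with hφDdef
    have hden : HasDerivAt (fun s : ℝ => 1 - phiWM ρ ν α kv (Λ + s • E)) (-φD) 0 :=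
      hφd.const_sub 1
    have hdiv : HasDerivAt
        (fun s : ℝ => phiWM ρ ν α kv (Λ + s • E) / (1 - phiWM ρ ν α kv (Λ + s • E)))
        ((φD * (1 - phiWM ρ ν α kv Λ) - phiWM ρ ν α kv Λ * (-φD)) /
          (1 - phiWM ρ ν α kv Λ) ^ 2) 0 := by
      have := hφd.fun_div hden (by simpa using h1φ)
      simpa using this
    have hgentry : gMat kv Λ a b
        = 2 * (Λᵀ * Λ).det ^ ((1:ℝ)/d) *
          ((kv ⬝ᵥ ((Λᵀ * Λ)⁻¹ *ᵥ kv)) / d * (Λ * (Λᵀ * Λ)⁻¹) a b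
            - (Λ *ᵥ ((Λᵀ * Λ)⁻¹ *ᵥ kv)) a * ((Λᵀ * Λ)⁻¹ *ᵥ kv) b) := by
      rw [gMat]
      rw [Matrix.mul_sub, vecMulVec_mul', mul_vecMulVec']
      rw [Matrix.mul_smul, Matrix.mul_one]
      simp only [Matrix.smul_apply, Matrix.sub_apply, Matrix.vecMulVec_apply, smul_eq_mul]
      rw [hwB kv, ← Matrix.mulVec_mulVec]
    have htrT : (T * (Λᵀ * Λ).adjugate).trace
        = (Λᵀ * Λ).det * (2 * (Λ * (Λᵀ * Λ)⁻¹) a b) := by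
      rw [hadjA, Matrix.mul_smul, Matrix.trace_smul, smul_eq_mul]
      congr 1
      rw [hT, add_mul, Matrix.trace_add]
      have t1 : (Eᵀ * Λ * (Λᵀ * Λ)⁻¹).trace = (Λ * (Λᵀ * Λ)⁻¹) a b := by
        rw [Matrix.mul_assoc]; exact htrE _
      have t2 : (Λᵀ * E * (Λᵀ * Λ)⁻¹).trace = (Λ * (Λᵀ * Λ)⁻¹) a b := by
        rw [Matrix.trace_mul_comm, ← Matrix.mul_assoc, htrE2]
        simp only [Matrix.mul_apply, Matrix.transpose_apply]
        exact Finset.sum_congr rfl fun l _ => by rw [hBsymE b l, mul_comm]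
      rw [t1, t2]; ring
    have hqD : kv ⬝ᵥ ((-((Λᵀ * Λ)⁻¹ * T * (Λᵀ * Λ)⁻¹)) *ᵥ kv)
        = -(2 * ((Λ *ᵥ ((Λᵀ * Λ)⁻¹ *ᵥ kv)) a * ((Λᵀ * Λ)⁻¹ *ᵥ kv) b)) := by
      rw [Matrix.neg_mulVec, dotProduct_neg]
      congr 1
      rw [← Matrix.mulVec_mulVec, ← Matrix.mulVec_mulVec, Matrix.dotProduct_mulVec, hwB]
      rw [hT, Matrix.add_mulVec, ← Matrix.mulVec_mulVec, ← Matrix.mulVec_mulVec,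
        dotProduct_add]
      rw [hdotE1, Matrix.dotProduct_mulVec, Matrix.vecMul_transpose, hdotE2]
      ring
    have hrp : (Λᵀ * Λ).det ^ ((1:ℝ)/d - 1) * (Λᵀ * Λ).det = (Λᵀ * Λ).det ^ ((1:ℝ)/d) := by
      have h5 := Real.rpow_add hδpos ((1:ℝ)/d - 1) 1
      rw [Real.rpow_one] at h5
      rw [← h5]; norm_num
    have hAD : AD = 4 * π ^ 2 * α ^ 2 * gMat kv Λ a b := by
      rw [hADdef, htrT, hqD, hgentry]
      linear_combination (4 * π ^ 2 * α ^ 2) * (2 * (Λ * (Λᵀ * Λ)⁻¹) a b * ((1:ℝ)/d) *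
        (kv ⬝ᵥ ((Λᵀ * Λ)⁻¹ *ᵥ kv))) * hrp
    have hXpow : aWM α kv Λ ^ (-(ν + (d : ℝ) / 2) - 1)
        = aWM α kv Λ ^ (-(ν + (d : ℝ) / 2)) * (aWM α kv Λ)⁻¹ := by
      rw [show -(ν + (d : ℝ) / 2) - 1 = -(ν + (d : ℝ) / 2) + (-1) by ring,
        Real.rpow_add ha0pos, Real.rpow_neg_one]
    have hφ0 : phiWM ρ ν α kv Λ
        = ρ * (Real.Gamma (ν + d / 2) / Real.Gamma ν) * (2 * Real.sqrt π * α) ^ d *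
          aWM α kv Λ ^ (-(ν + (d : ℝ) / 2)) := by
      simp only [phiWM]
    have hval : (φD * (1 - phiWM ρ ν α kv Λ) - phiWM ρ ν α kv Λ * (-φD)) /
          (1 - phiWM ρ ν α kv Λ) ^ 2
        = -(4 * π ^ 2 * α ^ 2 * (ν + (d : ℝ) / 2)) *
          (phiWM ρ ν α kv Λ /
            ((1 - phiWM ρ ν α kv Λ) ^ 2 * aWM α kv Λ) * gMat kv Λ a b) := by
      have h1φ' : (1:ℝ) - ρ * (Real.Gamma (ν + d / 2) / Real.Gamma ν) *
          (2 * Real.sqrt π * α) ^ d * aWM α kv Λ ^ (-(ν + (d : ℝ) / 2)) ≠ 0 := by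
        rw [← hφ0]; exact h1φ
      rw [hφDdef, hAD, hXpow, hφ0]
      set A0 := aWM α kv Λ with hA0
      set X0 := A0 ^ (-(ν + (d : ℝ) / 2)) with hX0
      set K0 := ρ * (Real.Gamma (ν + d / 2) / Real.Gamma ν) * (2 * Real.sqrt π * α) ^ d
        with hK0
      set G0 := gMat kv Λ a b with hG0
      have hA0ne : A0 ≠ 0 := ha0pos.ne'
      have h1ne : 1 - K0 * X0 ≠ 0 := h1φ'
      field_simp [hA0ne, h1ne]
      ring
    rw [hval] at hdiv
    exact hdiv
  have hCd : ∀ i j, HasDerivAt (fun s : ℝ => CappWM ρ ν α N t (Λ + s • E) i j)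
      ((∑ k ∈ latticeZN d N,
          ((-(4 * π ^ 2 * α ^ 2 * (ν + (d : ℝ) / 2)) *
            (phiWM ρ ν α (fun i => (k i : ℝ)) Λ /
              ((1 - phiWM ρ ν α (fun i => (k i : ℝ)) Λ) ^ 2 *
                aWM α (fun i => (k i : ℝ)) Λ) *
              gMat (fun i => (k i : ℝ)) Λ a b) : ℝ) : ℂ) •
          Matrix.vecMulVec (uVec t k) (vVec t k)) i j) 0 := by
    intro i j
    have hfun : (fun s : ℝ => CappWM ρ ν α N t (Λ + s • E) i j)
        = fun s => ∑ k ∈ latticeZN d N,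
            ((phiWM ρ ν α (fun i => (k i : ℝ)) (Λ + s • E) /
              (1 - phiWM ρ ν α (fun i => (k i : ℝ)) (Λ + s • E)) : ℝ) : ℂ) *
            (Matrix.vecMulVec (uVec t k) (vVec t k) i j) := by
      funext s
      simp [CappWM, Matrix.sum_apply, Matrix.smul_apply, smul_eq_mul]
    rw [hfun]
    have hh := HasDerivAt.fun_sum (u := latticeZN d N)
      (fun k hk => ((hck k hk).ofReal_comp).mul_const
        (Matrix.vecMulVec (uVec t k) (vVec t k) i j))
    refine hh.congr_deriv ?_
    simp [Matrix.sum_apply, Matrix.smul_apply, smul_eq_mul]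
  have hdetC : HasDerivAt (fun s : ℝ => (CappWM ρ ν α N t (Λ + s • E)).det)
      (((∑ k ∈ latticeZN d N,
          ((-(4 * π ^ 2 * α ^ 2 * (ν + (d : ℝ) / 2)) *
            (phiWM ρ ν α (fun i => (k i : ℝ)) Λ /
              ((1 - phiWM ρ ν α (fun i => (k i : ℝ)) Λ) ^ 2 *
                aWM α (fun i => (k i : ℝ)) Λ) *
              gMat (fun i => (k i : ℝ)) Λ a b) : ℝ) : ℂ) •
          Matrix.vecMulVec (uVec t k) (vVec t k)) *
        (CappWM ρ ν α N t Λ).adjugate).trace) 0 := by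
    have := hasDerivAt_det_path hCd
    simpa using this
  have hadjC : (CappWM ρ ν α N t Λ).adjugate
      = (CappWM ρ ν α N t Λ).det • (CappWM ρ ν α N t Λ)⁻¹ := by
    rw [Matrix.inv_def, smul_smul, Ring.mul_inverse_cancel _ hC, one_smul]
  have htrace : ((∑ k ∈ latticeZN d N,
          ((-(4 * π ^ 2 * α ^ 2 * (ν + (d : ℝ) / 2)) *
            (phiWM ρ ν α (fun i => (k i : ℝ)) Λ /
              ((1 - phiWM ρ ν α (fun i => (k i : ℝ)) Λ) ^ 2 *
                aWM α (fun i => (k i : ℝ)) Λ) *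
              gMat (fun i => (k i : ℝ)) Λ a b) : ℝ) : ℂ) •
          Matrix.vecMulVec (uVec t k) (vVec t k)) *
        (CappWM ρ ν α N t Λ).adjugate).trace
      = (CappWM ρ ν α N t Λ).det *
          ((-(4 * π ^ 2 * α ^ 2 * (ν + (d : ℝ) / 2)) : ℝ) : ℂ) *
          ∑ k ∈ latticeZN d N,
            ((phiWM ρ ν α (fun i => (k i : ℝ)) Λ /
                ((1 - phiWM ρ ν α (fun i => (k i : ℝ)) Λ) ^ 2 *
                  aWM α (fun i => (k i : ℝ)) Λ) *
                gMat (fun i => (k i : ℝ)) Λ a b : ℝ) : ℂ) *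
              (vVec t k ⬝ᵥ ((CappWM ρ ν α N t Λ)⁻¹ *ᵥ uVec t k)) := by
    rw [Finset.sum_mul, Matrix.trace_sum, Finset.mul_sum]
    refine Finset.sum_congr rfl fun k hk => ?_
    rw [smul_mul_assoc, Matrix.trace_smul, hadjC, Matrix.mul_smul, Matrix.trace_smul,
      trace_vecMulVec_mul]
    simp only [smul_eq_mul]
    push_cast
    ring
  rw [htrace] at hdetC
  exact hdetC
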